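/- Let p be a prime and q = p^e with p not dividing e. The polynomial Q(x) = x^p + x^{p-1} + ... + x - 1 is irreducible over F_q. -/

import Mathlib

open Polynomial

/-- Frobenius iteration argument: in a finite field of char `p` and cardinality `p ^ m`,
an element with `β ^ p = β + 1` forces `p ∣ m`. -/
lemma key_dvd {K : Type*} [Field K] [Fintype K] {p m : ℕ} (hp : p.Prime) [CharP K p]
    (hcard : Fintype.card K = p ^ m) (β : K) (hβ : β ^ p = β + 1) : p ∣ m := by
  haveI : Fact p.Prime := ⟨hp⟩
  have h1 : ∀ n : ℕ, β ^ (p ^ n) = β + n := by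
    intro n
    induction n with
    | zero => simp
    | succ n ih =>
      have h2 : β ^ p ^ (n + 1) = (β ^ p ^ n) ^ p := by
        rw [← pow_mul, ← pow_succ]
      have h3 : ((n : K)) ^ p = (n : K) := by
        rw [← frobenius_def]
        exact map_natCast (frobenius K p) n
      rw [h2, ih, add_pow_char, hβ, h3]
      push_cast
      ring
  have h2 : β ^ Fintype.card K = β := FiniteField.pow_card β
  rw [hcard, h1 m] at h2
  have h3 : (m : K) = 0 := by linear_combination h2
  exact (CharP.cast_eq_zero_iff K p m).mp h3

theorem stmt_7 (p e q : ℕ) (hp : p.Prime) (he : 0 < e) (hpe : ¬ p ∣ e)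
    (hq : q = p ^ e)
    (F : Type) [Field F] [Fintype F] (hF : Fintype.card F = q) :
    Irreducible ((∑ i ∈ Finset.Icc 1 p, (X : F[X]) ^ i) - 1) := by
  subst hq
  haveI : Fact p.Prime := ⟨hp⟩
  -- characteristic of F is p
  haveI hcF : CharP F p := by
    obtain ⟨r, hr⟩ := CharP.exists F
    haveI := hr
    obtain ⟨n, hrp, hcard⟩ := FiniteField.card F r
    have h1 : p ∣ r ^ (n : ℕ) := by
      rw [← hcard, hF]
      exact dvd_pow_self p he.ne'
    have h2 : p = r := (Nat.prime_dvd_prime_iff_eq hp hrp).mp (hp.dvd_of_dvd_pow h1)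
    subst h2
    exact hr
  set Q : F[X] := (∑ i ∈ Finset.Icc 1 p, (X : F[X]) ^ i) - 1 with hQdef
  have hp1 : 1 ≤ p := hp.one_lt.le
  have hX1 : (X : F[X]) - 1 ≠ 0 := X_sub_C_ne_zero 1
  -- geometric sum identity : (X-1)^(p-1) = ∑_{i<p} X^i
  have hgeom : ((X : F[X]) - 1) ^ (p - 1) = ∑ i ∈ Finset.range p, (X : F[X]) ^ i := by
    apply mul_right_cancel₀ hX1
    rw [geom_sum_mul, ← pow_succ]
    rw [show p - 1 + 1 = p from Nat.succ_pred_eq_of_pos hp.pos]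
    rw [sub_pow_char, one_pow]
  -- the key polynomial identity
  have hid : Q = ((X : F[X]) - 1) ^ p + (((X : F[X]) - 1) ^ (p - 1) - 1) := by
    have hins : Finset.range (p + 1) = insert 0 (Finset.Icc 1 p) := by
      ext i
      simp only [Finset.mem_range, Finset.mem_insert, Finset.mem_Icc]
      omega
    have hsum : ∑ i ∈ Finset.Icc 1 p, (X : F[X]) ^ i
        = (∑ i ∈ Finset.range p, (X : F[X]) ^ i) + X ^ p - 1 := by
      have h1 : ∑ i ∈ Finset.range (p + 1), (X : F[X]) ^ i
          = 1 + ∑ i ∈ Finset.Icc 1 p, (X : F[X]) ^ i := by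
        rw [hins, Finset.sum_insert (by simp), pow_zero]
      have h2 : ∑ i ∈ Finset.range (p + 1), (X : F[X]) ^ i
          = (∑ i ∈ Finset.range p, (X : F[X]) ^ i) + X ^ p := Finset.sum_range_succ _ p
      rw [h2] at h1
      linear_combination -h1
    rw [hQdef, hsum, hgeom, sub_pow_char, one_pow]
    ring
  have hdX : ((X : F[X]) - 1).degree = 1 := by
    simpa using degree_X_sub_C (1 : F)
  have hdegX1p : (((X : F[X]) - 1) ^ p).degree = (p : WithBot ℕ) := by
    rw [degree_pow, hdX]
    simp
  have hdeglt : (((X : F[X]) - 1) ^ (p - 1) - 1).degree < (((X : F[X]) - 1) ^ p).degree := by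
    rw [hdegX1p]
    apply lt_of_le_of_lt (degree_sub_le _ _)
    rw [max_lt_iff]
    constructor
    · have h1 : (((X : F[X]) - 1) ^ (p - 1)).degree = ((p - 1 : ℕ) : WithBot ℕ) := by
        rw [degree_pow, hdX]
        simp
      rw [h1]
      exact_mod_cast Nat.sub_lt hp.pos one_pos
    · apply lt_of_le_of_lt degree_one_le
      exact_mod_cast hp.pos
  have hmonic : Q.Monic := by
    rw [hid]
    exact ((monic_X_sub_C (1 : F)).pow p).add_of_left hdeglt
  have hdeg : Q.natDegree = p := by
    have : Q.degree = (p : WithBot ℕ) := by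
      rw [hid, degree_add_eq_left_of_degree_lt hdeglt, hdegX1p]
    exact natDegree_eq_of_degree_eq_some this
  have hQ0 : Q ≠ 0 := hmonic.ne_zero
  have hQnU : ¬ IsUnit Q := by
    intro h
    have h0 := natDegree_eq_zero_of_isUnit h
    rw [hdeg] at h0
    exact hp.ne_zero h0
  obtain ⟨g, hgirr, hgdvd⟩ := WfDvdMonoid.exists_irreducible_factor hQnU hQ0
  -- a root of g in the algebraic closure
  set Ω := AlgebraicClosure F with hΩ
  haveI : CharP Ω p := charP_of_injective_algebraMap (algebraMap F Ω).injective p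
  obtain ⟨α, hα⟩ := IsAlgClosed.exists_aeval_eq_zero Ω g
    (degree_pos_of_irreducible hgirr).ne'
  have hαQ : aeval α Q = 0 := by
    obtain ⟨c, hc⟩ := hgdvd
    rw [hc, map_mul, hα, zero_mul]
  -- the root satisfies (α-1)^p + (α-1)^(p-1) = 1
  have halg : (α - 1) ^ p + (α - 1) ^ (p - 1) = 1 := by
    have := hαQ
    rw [hid] at this
    simp only [map_add, map_sub, map_pow, map_one, aeval_X] at this
    linear_combination this
  have hα1 : α - 1 ≠ 0 := by
    intro h
    rw [h, zero_pow hp.pos.ne', zero_pow (by have := hp.two_le; omega : p - 1 ≠ 0)] at halg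
    simp at halg
  -- β = (α-1)⁻¹ satisfies β^p = β + 1
  have hβΩ : ((α - 1)⁻¹) ^ p = (α - 1)⁻¹ + 1 := by
    have hsplit : (α - 1) ^ p = (α - 1) ^ (p - 1) * (α - 1) := by
      rw [← pow_succ]
      congr 1
      omega
    have hγp : (α - 1) ^ p ≠ 0 := pow_ne_zero _ hα1
    apply mul_right_cancel₀ hγp
    rw [← mul_pow, inv_mul_cancel₀ hα1, one_pow, add_mul, one_mul, hsplit]
    have hinv : (α - 1)⁻¹ * ((α - 1) ^ (p - 1) * (α - 1)) = (α - 1) ^ (p - 1) := by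
      rw [mul_comm ((α - 1) ^ (p - 1)) (α - 1), ← mul_assoc, inv_mul_cancel₀ hα1, one_mul]
    rw [hinv]
    rw [hsplit] at halg
    linear_combination -halg
  -- work in F⟮α⟯
  have hint : IsIntegral F α := IsAlgebraic.isIntegral ⟨Q, hQ0, hαQ⟩
  haveI : FiniteDimensional F (IntermediateField.adjoin F {α} : IntermediateField F Ω) :=
    IntermediateField.adjoin.finiteDimensional hint
  set K := (IntermediateField.adjoin F {α} : IntermediateField F Ω) with hK
  haveI : Finite K := Module.finite_of_finite F
  haveI : Fintype K := Fintype.ofFinite K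
  haveI : CharP K p := charP_of_injective_algebraMap (algebraMap F K).injective p
  set d := Module.finrank F K with hd
  have hcardK : Fintype.card K = p ^ (e * d) := by
    rw [Module.card_eq_pow_finrank (K := F) (V := K), hF, ← pow_mul]
  -- the element β in K
  have hαK : α ∈ K := IntermediateField.mem_adjoin_simple_self F α
  set βK : K := (⟨α, hαK⟩ - 1)⁻¹ with hβK
  have hβKcoe : (βK : Ω) = (α - 1)⁻¹ := by
    push_cast [hβK]
    rfl
  have hβKeq : βK ^ p = βK + 1 := by
    apply Subtype.ext
    push_cast [hβKcoe]
    exact hβΩ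
  have hdvd : p ∣ e * d := key_dvd hp hcardK βK hβKeq
  have hpd : p ∣ d := (hp.dvd_mul.mp hdvd).resolve_left hpe
  -- minpoly F α is (up to units) g, with degree d
  have hmindvd : minpoly F α ∣ g := minpoly.dvd F α hα
  have hmindeg : (minpoly F α).natDegree = d := by
    rw [hd, hK, IntermediateField.adjoin.finrank hint]
  have hgdeg : g.natDegree = d := by
    obtain ⟨c, hc⟩ := hmindvd
    rcases hgirr.isUnit_or_isUnit hc with h | h
    · exact absurd h (minpoly.not_isUnit F α)
    · have hcne : c ≠ 0 := by
        intro h0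
        rw [h0, mul_zero] at hc
        exact hgirr.ne_zero hc
      rw [hc, natDegree_mul (minpoly.ne_zero hint) hcne, natDegree_eq_zero_of_isUnit h,
        add_zero, hmindeg]
  have hgle : g.natDegree ≤ p := by
    rw [← hdeg]
    exact natDegree_le_of_dvd hgdvd hQ0
  have hd0 : d ≠ 0 := by
    intro h0
    rw [h0] at hmindeg
    have := minpoly.natDegree_pos hint
    omega
  have hdp : d = p := le_antisymm (hgdeg ▸ hgle) (Nat.le_of_dvd (Nat.pos_of_ne_zero hd0) hpd)
  -- conclude Q is associated to g
  obtain ⟨c, hc⟩ := hgdvd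
  have hc0 : c ≠ 0 := by
    intro h0
    rw [h0, mul_zero] at hc
    exact hQ0 hc
  have hcdeg : c.natDegree = 0 := by
    have := natDegree_mul hgirr.ne_zero hc0
    rw [← hc, hdeg, hgdeg, hdp] at this
    omega
  have hcu : IsUnit c := by
    rw [Polynomial.isUnit_iff]
    refine ⟨c.coeff 0, ?_, (Polynomial.eq_C_of_natDegree_eq_zero hcdeg).symm⟩
    apply isUnit_iff_ne_zero.mpr
    intro h0
    apply hc0
    rw [Polynomial.eq_C_of_natDegree_eq_zero hcdeg, h0, map_zero]
  have hassoc : Associated g Q := ⟨hcu.unit, by rw [IsUnit.unit_spec, ← hc]⟩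
  exact hassoc.irreducible hgirr
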